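/- arXiv:1307.6433 — 3 statements merged into one kernel-verified Lean document; each statement's English description precedes it below -/
import Mathlib

section
/- Let X be a set, T : X → X a map, N ≥ 1 an integer, and φ : X → ℝ a function together with real numbers m, M such that m ≤ φ(x) ≤ M for all x ∈ X. Define φ̃ := (1/N)·S_N(φ). Then for every integer n ≥ 1 and every x ∈ X, |S_n(φ̃)(x) − S_n(φ)(x)| ≤ (N−1)·(M − m). -/
/-- With `m ≤ φ ≤ M` on `X` and `φ̃ := (1/N)·S_N(φ)`, for every `n ≥ 1`
and `x ∈ X` we have `|S_n(φ̃)(x) − S_n(φ)(x)| ≤ (N−1)·(M − m)`. -/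
theorem stmt1 {X : Type*} (T : X → X) (N : ℕ) (hN : 1 ≤ N)
    (φ : X → ℝ) (m M : ℝ) (hm : ∀ x, m ≤ φ x) (hM : ∀ x, φ x ≤ M)
    (φt : X → ℝ)
    (hφt : ∀ x, φt x = (1 / (N : ℝ)) * ∑ i ∈ Finset.range N, φ (T^[i] x)) :
    ∀ n : ℕ, 1 ≤ n → ∀ x,
      |(∑ i ∈ Finset.range n, φt (T^[i] x)) - ∑ i ∈ Finset.range n, φ (T^[i] x)|
        ≤ ((N : ℝ) - 1) * (M - m) := by
  intro n hn x
  have hNpos : (0:ℝ) < N := by exact_mod_cast hN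
  have hNne : (N:ℝ) ≠ 0 := ne_of_gt hNpos
  have hMm : 0 ≤ M - m := by linarith [hm x, hM x]
  set f : ℕ → ℝ := fun i => φ (T^[i] x) with hf
  set B : ℕ → ℝ := fun j => ∑ i ∈ Finset.range n, f (j + i) with hB
  have hB0 : B 0 = ∑ i ∈ Finset.range n, f i := by simp [hB]
  have h1 : (∑ i ∈ Finset.range n, φt (T^[i] x))
      = (1 / (N:ℝ)) * ∑ j ∈ Finset.range N, B j := by
    simp only [hφt]
    rw [← Finset.mul_sum, Finset.sum_comm]
    congr 1
    apply Finset.sum_congr rfl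
    intro j _
    apply Finset.sum_congr rfl
    intro i _
    simp [hB, hf, ← Function.iterate_add_apply]
  have hjb : ∀ j ∈ Finset.range N, |B j - B 0| ≤ ((N:ℝ)-1) * (M - m) := by
    intro j hj
    rw [Finset.mem_range] at hj
    set s := Finset.Ico j (j+n) with hs
    set t := Finset.range n with ht
    have hBj : B j = ∑ i ∈ s, f i := by
      rw [hs, Finset.sum_Ico_eq_sum_range]
      simp [hB, ht]
    have e1 : ∑ i ∈ s ∩ t, f i + ∑ i ∈ s \ t, f i = ∑ i ∈ s, f i :=
      Finset.sum_inter_add_sum_sdiff s t f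
    have e2 : ∑ i ∈ t ∩ s, f i + ∑ i ∈ t \ s, f i = ∑ i ∈ t, f i :=
      Finset.sum_inter_add_sum_sdiff t s f
    have hic : s ∩ t = t ∩ s := Finset.inter_comm s t
    have hdiff : B j - B 0 = ∑ i ∈ s \ t, f i - ∑ i ∈ t \ s, f i := by
      rw [hic] at e1
      rw [hBj, hB0, ht]
      linarith [e1, e2]
    -- cards
    have hcs : s.card = n := by simp [hs]
    have hct : t.card = n := by simp [ht]
    have c1 : (s \ t).card + (s ∩ t).card = s.card := Finset.card_sdiff_add_card_inter s t
    have c2 : (t \ s).card + (t ∩ s).card = t.card := Finset.card_sdiff_add_card_inter t s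
    have hceq : (s \ t).card = (t \ s).card := by
      rw [hic] at c1; omega
    have hsub : s \ t ⊆ Finset.Ico n (j+n) := by
      intro i hi
      simp only [hs, ht, Finset.mem_sdiff, Finset.mem_Ico, Finset.mem_range] at hi ⊢
      omega
    have hk : (s \ t).card ≤ j := by
      have := Finset.card_le_card hsub
      simpa using this
    set k := (s \ t).card with hkdef
    have hkN : (k:ℝ) ≤ (N:ℝ) - 1 := by
      have : k + 1 ≤ N := by omega
      have := (Nat.cast_le (α := ℝ)).2 this
      push_cast at this
      linarith
    have bu1 : ∑ i ∈ s \ t, f i ≤ (k:ℝ) * M := by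
      have := Finset.sum_le_card_nsmul (s \ t) f M (fun i _ => hM _)
      simpa [nsmul_eq_mul] using this
    have bl1 : (k:ℝ) * m ≤ ∑ i ∈ s \ t, f i := by
      have := Finset.card_nsmul_le_sum (s \ t) f m (fun i _ => hm _)
      simpa [nsmul_eq_mul] using this
    have bu2 : ∑ i ∈ t \ s, f i ≤ (k:ℝ) * M := by
      have := Finset.sum_le_card_nsmul (t \ s) f M (fun i _ => hM _)
      rw [← hceq] at this
      simpa [nsmul_eq_mul] using this
    have bl2 : (k:ℝ) * m ≤ ∑ i ∈ t \ s, f i := by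
      have := Finset.card_nsmul_le_sum (t \ s) f m (fun i _ => hm _)
      rw [← hceq] at this
      simpa [nsmul_eq_mul] using this
    rw [hdiff, abs_le]
    constructor
    · nlinarith
    · nlinarith
  have h2 : (∑ i ∈ Finset.range n, φt (T^[i] x)) - ∑ i ∈ Finset.range n, φ (T^[i] x)
      = (1 / (N:ℝ)) * ∑ j ∈ Finset.range N, (B j - B 0) := by
    rw [h1, Finset.sum_sub_distrib, Finset.sum_const, Finset.card_range, nsmul_eq_mul,
      mul_sub, hB0]
    have : (1 / (N:ℝ)) * ((N:ℝ) * ∑ i ∈ Finset.range n, f i)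
        = ∑ i ∈ Finset.range n, f i := by field_simp
    rw [this]
  rw [h2]
  calc |(1 / (N:ℝ)) * ∑ j ∈ Finset.range N, (B j - B 0)|
      ≤ (1 / (N:ℝ)) * ∑ j ∈ Finset.range N, |B j - B 0| := by
        rw [abs_mul, abs_of_pos (by positivity : (0:ℝ) < 1 / N)]
        exact mul_le_mul_of_nonneg_left (Finset.abs_sum_le_sum_abs _ _) (by positivity)
    _ ≤ (1 / (N:ℝ)) * ∑ j ∈ Finset.range N, (((N:ℝ)-1) * (M - m)) := by
        apply mul_le_mul_of_nonneg_left (Finset.sum_le_sum hjb) (by positivity)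
    _ = ((N:ℝ)-1) * (M - m) := by
        rw [Finset.sum_const, Finset.card_range, nsmul_eq_mul]
        field_simp
end

section
/- Let a < b be real numbers, put I = [a,b], and let f : I → I be a continuous map that is topologically exact, in the sense that for every closed subinterval J ⊆ I containing more than one point there exists an integer m ≥ 1 with fᵐ(J) = I. Then for every integer n ≥ 1 and every interval U ⊆ I on which the n-th iterate fⁿ is strictly monotone, there is at most one point p ∈ U with fⁿ(p) = p; that is, any two fixed points of fⁿ lying in U coincide. -/
open Set

private lemma stmt6_key (a b : ℝ) (hab : a < b) (f : ℝ → ℝ)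
    (hmaps : Set.MapsTo f (Set.Icc a b) (Set.Icc a b))
    (hexact : ∀ J : Set ℝ, J ⊆ Set.Icc a b → IsClosed J → J.OrdConnected → J.Nontrivial →
      ∃ m : ℕ, 1 ≤ m ∧ f^[m] '' J = Set.Icc a b)
    (n : ℕ) (hn : 1 ≤ n) (U : Set ℝ) (hUsub : U ⊆ Set.Icc a b) (hUint : U.OrdConnected)
    (hmono : StrictMonoOn (f^[n]) U)
    (p q : ℝ) (hp : p ∈ U) (hq : q ∈ U) (hfp : f^[n] p = p) (hfq : f^[n] q = q)
    (hpq : p < q) : False := by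
  have hIccU : Icc p q ⊆ U := hUint.out hp hq
  have hJI : Icc p q ⊆ Icc a b := hIccU.trans hUsub
  -- fⁿ maps [p,q] into itself
  have hgJ : MapsTo (f^[n]) (Icc p q) (Icc p q) := by
    intro x hx
    constructor
    · calc p = f^[n] p := hfp.symm
        _ ≤ f^[n] x := hmono.monotoneOn hp (hIccU hx) hx.1
    · calc f^[n] x ≤ f^[n] q := hmono.monotoneOn (hIccU hx) hq hx.2
        _ = q := hfq
  obtain ⟨m, hm1, hm⟩ := hexact (Icc p q) hJI isClosed_Icc Set.ordConnected_Icc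
    ⟨p, ⟨le_refl p, hpq.le⟩, q, ⟨hpq.le, le_refl q⟩, hpq.ne⟩
  -- f '' I = I
  have hfI : f '' Icc a b = Icc a b := by
    obtain ⟨k, rfl⟩ := Nat.exists_eq_add_of_le hm1
    have h1 : f^[1 + k] '' Icc p q ⊆ f '' Icc a b := by
      rw [Function.iterate_add, Set.image_comp]
      simp only [Function.iterate_one]
      exact Set.image_mono ((Set.MapsTo.image_subset ((hmaps.iterate k).mono_left hJI)))
    rw [hm] at h1
    exact le_antisymm (Set.MapsTo.image_subset hmaps) h1
  have hIk : ∀ k : ℕ, f^[k] '' Icc a b = Icc a b := by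
    intro k
    induction k with
    | zero => simp
    | succ k ih => rw [Function.iterate_succ', Set.image_comp, ih, hfI]
  -- f^[n*m] '' [p,q] = I
  have hbig : f^[n * m] '' Icc p q = Icc a b := by
    have hnm : n * m = (n - 1) * m + m := by
      have : n - 1 + 1 = n := Nat.succ_pred_eq_of_pos hn
      calc n * m = ((n-1) + 1) * m := by rw [this]
        _ = (n-1) * m + m := by ring
    rw [hnm, Function.iterate_add, Set.image_comp, hm, hIk]
  -- but f^[n*m] '' [p,q] ⊆ [p,q]
  have hsub : f^[n * m] '' Icc p q ⊆ Icc p q := by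
    rw [Function.iterate_mul]
    exact Set.MapsTo.image_subset (hgJ.iterate m)
  rw [hbig] at hsub
  have hpa : p = a := le_antisymm (hsub ⟨le_refl a, hab.le⟩).1 (hJI ⟨le_refl p, hpq.le⟩).1
  have hqb : q = b := le_antisymm (hJI ⟨hpq.le, le_refl q⟩).2 (hsub ⟨hab.le, le_refl b⟩).2
  subst hpa; subst hqb
  -- now f^[n] is strictly monotone on all of [a,b] = Icc p q
  have hmono' : StrictMonoOn (f^[n]) (Icc p q) := hmono.mono hIccU
  have hgI : MapsTo (f^[n]) (Icc p q) (Icc p q) := hmaps.iterate n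
  set c := (p + q) / 2 with hc
  have hpc : p < c := by simp [hc]; linarith
  have hcq : c < q := by simp [hc]; linarith
  have hJ2 : Icc p c ⊆ Icc p q := Set.Icc_subset_Icc le_rfl hcq.le
  obtain ⟨m₂, hm₂1, hm₂⟩ := hexact (Icc p c) (hJ2.trans (le_refl _)) isClosed_Icc
    Set.ordConnected_Icc ⟨p, ⟨le_refl p, hpc.le⟩, c, ⟨hpc.le, le_refl c⟩, hpc.ne⟩
  have hbig2 : f^[n * m₂] '' Icc p c = Icc p q := by
    have hnm : n * m₂ = (n - 1) * m₂ + m₂ := by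
      have : n - 1 + 1 = n := Nat.succ_pred_eq_of_pos hn
      calc n * m₂ = ((n-1) + 1) * m₂ := by rw [this]
        _ = (n-1) * m₂ + m₂ := by ring
    rw [hnm, Function.iterate_add, Set.image_comp, hm₂, hIk]
  have hmonoIter : ∀ k : ℕ, StrictMonoOn ((f^[n])^[k]) (Icc p q) := by
    intro k
    induction k with
    | zero => intro x hx y hy hxy; simpa using hxy
    | succ k ih =>
        rw [Function.iterate_succ]
        exact ih.comp hmono' hgI
  have hb : q ∈ f^[n * m₂] '' Icc p c := hbig2 ▸ ⟨hab.le, le_refl q⟩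
  obtain ⟨x, hx, hxq⟩ := hb
  rw [Function.iterate_mul] at hxq
  have hxltq : x < q := lt_of_le_of_lt hx.2 hcq
  have h1 : (f^[n])^[m₂] x < (f^[n])^[m₂] q :=
    hmonoIter m₂ (hJ2 hx) ⟨hab.le, le_refl q⟩ hxltq
  have h2 : (f^[n])^[m₂] q ≤ q := ((hgI.iterate m₂) ⟨hab.le, le_refl q⟩).2
  rw [hxq] at h1
  linarith

/-- Let `I = [a,b]` with `a < b` and let `f : I → I` be continuous and
topologically exact: for every closed subinterval `J ⊆ I` with more than one point there
is `m ≥ 1` with `fᵐ(J) = I`. Then for every `n ≥ 1` and every interval `U ⊆ I` on which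
`fⁿ` is strictly monotone, any two fixed points of `fⁿ` in `U` coincide. -/
theorem stmt6 (a b : ℝ) (hab : a < b) (f : ℝ → ℝ)
    (hmaps : Set.MapsTo f (Set.Icc a b) (Set.Icc a b))
    (hcont : ContinuousOn f (Set.Icc a b))
    (hexact : ∀ J : Set ℝ, J ⊆ Set.Icc a b → IsClosed J → J.OrdConnected → J.Nontrivial →
      ∃ m : ℕ, 1 ≤ m ∧ f^[m] '' J = Set.Icc a b)
    (n : ℕ) (hn : 1 ≤ n) (U : Set ℝ) (hUsub : U ⊆ Set.Icc a b) (hUint : U.OrdConnected)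
    (hmono : StrictMonoOn (f^[n]) U ∨ StrictAntiOn (f^[n]) U) :
    ∀ p ∈ U, ∀ q ∈ U, f^[n] p = p → f^[n] q = q → p = q := by
  intro p hp q hq hfp hfq
  by_contra hne
  rcases lt_or_gt_of_ne hne with hpq | hqp
  · rcases hmono with h | h
    · exact stmt6_key a b hab f hmaps hexact n hn U hUsub hUint h p q hp hq hfp hfq hpq
    · have := h hp hq hpq
      rw [hfp, hfq] at this
      exact absurd this (not_lt.mpr hpq.le)
  · rcases hmono with h | h
    · exact stmt6_key a b hab f hmaps hexact n hn U hUsub hUint h q p hq hp hfq hfp hqp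
    · have := h hq hp hqp
      rw [hfp, hfq] at this
      exact absurd this (not_lt.mpr hqp.le)
end

section
/- Let X be a compact metric space equipped with its Borel σ-algebra, and let f : X → X be a continuous map such that f⁻¹({x}) is finite for every x ∈ X and such that X is the union of countably many pairwise disjoint Borel sets X₁, X₂, … on each of which f is injective. Let μ be a Borel probability measure on X, let φ : X → ℝ be bounded and Borel measurable, let p ∈ ℝ, and set g := exp(p − φ). Assume μ is g-conformal for f, i.e. μ(f(A)) = ∫_A g dμ for every Borel set A ⊆ X on which f is injective. Then for every Borel measurable function h : X → [0,∞], ∫_X ( ∑_{y ∈ f⁻¹({x})} e^{φ(y) − p}·h(y) ) dμ(x) = ∫_X h dμ. -/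
open MeasureTheory
open scoped ENNReal

/-- Let `X` be a compact metric space with its Borel σ-algebra, `f : X → X`
continuous with finite fibers, and suppose `X` is a countable disjoint union of Borel
sets on each of which `f` is injective. Let `μ` be a Borel probability measure, `φ`
bounded Borel measurable, `p ∈ ℝ`, `g := exp(p − φ)`, and assume `μ` is `g`-conformal:
`μ(f(A)) = ∫_A g dμ` for every Borel `A` on which `f` is injective. Then for every Borel
measurable `h : X → [0,∞]`,
`∫ (∑_{y ∈ f⁻¹({x})} e^{φ(y)−p}·h(y)) dμ(x) = ∫ h dμ`. -/
theorem stmt9 {X : Type*} [MetricSpace X] [CompactSpace X] [MeasurableSpace X]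
    [BorelSpace X]
    (f : X → X) (hf : Continuous f) (hfib : ∀ x, (f ⁻¹' {x}).Finite)
    (Xs : ℕ → Set X) (hXmeas : ∀ i, MeasurableSet (Xs i))
    (hXdisj : Pairwise (Function.onFun Disjoint Xs))
    (hXunion : ⋃ i, Xs i = Set.univ)
    (hXinj : ∀ i, Set.InjOn f (Xs i))
    (μ : Measure X) [IsProbabilityMeasure μ]
    (φ : X → ℝ) (hφmeas : Measurable φ) (hφbdd : ∃ Cb : ℝ, ∀ x, |φ x| ≤ Cb)
    (p : ℝ) (g : X → ℝ) (hg : ∀ x, g x = Real.exp (p - φ x))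
    (hconf : ∀ A : Set X, MeasurableSet A → Set.InjOn f A →
      μ (f '' A) = ∫⁻ x in A, ENNReal.ofReal (g x) ∂μ)
    (h : X → ℝ≥0∞) (hh : Measurable h) :
    ∫⁻ x, (∑' y : (f ⁻¹' {x}), ENNReal.ofReal (Real.exp (φ y - p)) * h y) ∂μ
      = ∫⁻ x, h x ∂μ := by
  haveI : CompleteSpace X := complete_of_compact
  haveI : PolishSpace X := inferInstance
  set F : X → ℝ≥0∞ := fun y => ENNReal.ofReal (Real.exp (φ y - p)) * h y with hFdef
  have hFmeas : Measurable F :=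
    (ENNReal.measurable_ofReal.comp ((hφmeas.sub measurable_const).exp)).mul hh
  -- the branch embeddings
  have hemb : ∀ i, MeasurableEmbedding ((Xs i).restrict f) := fun i =>
    (hf.continuousOn).measurableEmbedding (hXmeas i) (hXinj i)
  have himg : ∀ i, MeasurableSet (f '' Xs i) := fun i =>
    (hXmeas i).image_of_continuousOn_injOn hf.continuousOn (hXinj i)
  -- branch transfer functions
  set S : ℕ → X → ℝ≥0∞ := fun i =>
    Function.extend ((Xs i).restrict f) (fun z => F z) (fun _ => 0) with hSdef
  have hSmeas : ∀ i, Measurable (S i) := fun i =>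
    (hemb i).measurable_extend (hFmeas.comp measurable_subtype_coe) measurable_const
  -- value of S i
  have hSval : ∀ i, ∀ z ∈ Xs i, S i (f z) = F z := by
    intro i z hz
    have : f z = (Xs i).restrict f ⟨z, hz⟩ := rfl
    rw [hSdef]
    simp only [this]
    rw [(hemb i).injective.extend_apply]
  have hSzero : ∀ i x, x ∉ f '' Xs i → S i x = 0 := by
    intro i x hx
    rw [hSdef]
    refine Function.extend_apply' _ _ _ ?_
    rintro ⟨⟨z, hz⟩, rfl⟩
    exact hx ⟨z, hz, rfl⟩
  -- pointwise decomposition of the fiber sum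
  have claim : ∀ x, (∑' y : (f ⁻¹' {x}), F y) = ∑' i, S i x := by
    intro x
    have step1 : (∑' y : (f ⁻¹' {x}), F y)
        = ∑' i, ∑' y : X, (f ⁻¹' {x} ∩ Xs i).indicator F y := by
      rw [tsum_subtype, ENNReal.tsum_comm]
      congr 1; ext y
      by_cases hy : y ∈ f ⁻¹' {x}
      · obtain ⟨i₀, hi₀⟩ : ∃ i, y ∈ Xs i := by
          have : y ∈ ⋃ i, Xs i := hXunion ▸ Set.mem_univ y
          exact Set.mem_iUnion.mp this
        rw [Set.indicator_of_mem hy, tsum_eq_single i₀]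
        · rw [Set.indicator_of_mem (Set.mem_inter hy hi₀)]
        · intro j hj
          apply Set.indicator_of_notMem
          rintro ⟨-, hyj⟩
          exact (hXdisj hj).le_bot ⟨hyj, hi₀⟩
      · rw [Set.indicator_of_notMem hy]
        exact (ENNReal.tsum_eq_zero.mpr fun i =>
          Set.indicator_of_notMem (fun hc => hy hc.1) _).symm
    rw [step1]
    congr 1; ext i
    by_cases hx : x ∈ f '' Xs i
    · obtain ⟨z, hz, rfl⟩ := hx
      have hset : f ⁻¹' {f z} ∩ Xs i = {z} := by
        ext w
        constructor
        · rintro ⟨hw1, hw2⟩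
          exact hXinj i hw2 hz (by simpa using hw1)
        · rintro rfl; exact ⟨rfl, hz⟩
      rw [hSval i z hz, tsum_eq_single z]
      · exact Set.indicator_of_mem (hset ▸ Set.mem_singleton z) F
      · intro y hy
        apply Set.indicator_of_notMem
        rw [hset]
        simpa using hy
    · rw [hSzero i x hx, ENNReal.tsum_eq_zero]
      intro y
      apply Set.indicator_of_notMem
      rintro ⟨hy1, hy2⟩
      exact hx ⟨y, hy2, by simpa using hy1⟩
  -- the conformal measure identity per branch
  have hbranch : ∀ i, ∫⁻ x, S i x ∂μ = ∫⁻ z in Xs i, h z ∂μ := by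
    intro i
    set κ : Measure X :=
      (μ.restrict (Xs i)).withDensity (fun z => ENNReal.ofReal (g z)) with hκdef
    have hgmeas : Measurable (fun z => ENNReal.ofReal (g z)) := by
      have : (fun z => ENNReal.ofReal (g z))
          = fun z => ENNReal.ofReal (Real.exp (p - φ z)) := by
        ext z; rw [hg]
      rw [this]
      exact ENNReal.measurable_ofReal.comp ((measurable_const.sub hφmeas).exp)
    have hmap : Measure.map f κ = μ.restrict (f '' Xs i) := by
      ext s hs
      rw [Measure.map_apply hf.measurable hs, Measure.restrict_apply hs, hκdef,
        withDensity_apply _ (hf.measurable hs), Measure.restrict_restrict (hf.measurable hs)]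
      rw [← hconf _ ((hf.measurable hs).inter (hXmeas i))
        ((hXinj i).mono Set.inter_subset_right), Set.image_preimage_inter]
    have step1 : ∫⁻ x, S i x ∂μ = ∫⁻ x, S i x ∂(μ.restrict (f '' Xs i)) := by
      rw [← lintegral_indicator (himg i)]
      congr 1; ext x
      by_cases hx : x ∈ f '' Xs i
      · rw [Set.indicator_of_mem hx]
      · rw [Set.indicator_of_notMem hx, hSzero i x hx]
    have hcomp : Measurable fun a => S i (f a) := (hSmeas i).comp hf.measurable
    rw [step1, ← hmap, lintegral_map (hSmeas i) hf.measurable, hκdef,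
      lintegral_withDensity_eq_lintegral_mul _ hgmeas hcomp]
    refine setLIntegral_congr_fun (hXmeas i) ?_
    intro z hz
    simp only [Pi.mul_apply]
    rw [hSval i z hz, hFdef]
    rw [hg, ← mul_assoc, ← ENNReal.ofReal_mul (Real.exp_nonneg _), ← Real.exp_add]
    simp
  calc ∫⁻ x, (∑' y : (f ⁻¹' {x}), F y) ∂μ
      = ∫⁻ x, ∑' i, S i x ∂μ := by simp_rw [claim]
    _ = ∑' i, ∫⁻ x, S i x ∂μ := lintegral_tsum (fun i => (hSmeas i).aemeasurable)
    _ = ∑' i, ∫⁻ z in Xs i, h z ∂μ := by simp_rw [hbranch]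
    _ = ∫⁻ z in ⋃ i, Xs i, h z ∂μ := (lintegral_iUnion hXmeas hXdisj _).symm
    _ = ∫⁻ x, h x ∂μ := by rw [hXunion, Measure.restrict_univ]
end
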